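/- Let w ∈ W_I have cycle decomposition w = w_1⋯w_k with orbits O_1,…,O_k, and let I = I_1 ⊔ ⋯ ⊔ I_m be a decomposition into σ-stable subsets such that the subgroup P := W_{I_1}⋯W_{I_m} ≤ W_I contains w. If w has pairwise distinct cycles, then: (i) C_{W_I}(w) = C_{W_{O_1}}(w_1)⋯C_{W_{O_k}}(w_k); (ii) |C_{W_I}(w)| ≤ 2^k · n^k; (iii) C_P(w) = C_{W_I}(w). -/

import Mathlib

/-- The subgroup `W_O` of `W_I = C_{Sym(I)}(σ)` consisting of elements fixing `I ∖ O`
pointwise. -/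
def WO {I : Type*} [Fintype I] [DecidableEq I] (σ : Equiv.Perm I) (O : Finset I) :
    Subgroup (Equiv.Perm I) :=
  Subgroup.centralizer ({σ} : Set (Equiv.Perm I)) ⊓
    fixingSubgroup (Equiv.Perm I) ((↑O : Set I)ᶜ)

/-- Restriction of a permutation preserving a finset `O` to a permutation that agrees with it
on `O` and is the identity elsewhere. -/
def restrictPerm {I : Type*} [DecidableEq I] (x : Equiv.Perm I) (O : Finset I)
    (h : ∀ a, a ∈ O ↔ x a ∈ O) : Equiv.Perm I where
  toFun a := if a ∈ O then x a else a
  invFun a := if a ∈ O then x.symm a else a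
  left_inv a := by
    by_cases ha : a ∈ O
    · simp [ha, (h a).mp ha]
    · simp [ha]
  right_inv a := by
    by_cases ha : a ∈ O
    · have hs : x.symm a ∈ O := by
        rw [h (x.symm a)]; simpa using ha
      simp [ha, hs]
    · simp [ha]

lemma restrictPerm_apply_mem {I : Type*} [DecidableEq I] (x : Equiv.Perm I) (O : Finset I)
    (h : ∀ a, a ∈ O ↔ x a ∈ O) {a : I} (ha : a ∈ O) : restrictPerm x O h a = x a :=
  if_pos ha

lemma restrictPerm_apply_not_mem {I : Type*} [DecidableEq I] (x : Equiv.Perm I) (O : Finset I)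
    (h : ∀ a, a ∈ O ↔ x a ∈ O) {a : I} (ha : a ∉ O) : restrictPerm x O h a = a :=
  if_neg ha

/-- A permutation fixing the complement of a finset pointwise preserves the finset. -/
lemma fix_compl_stable {I : Type*} [DecidableEq I] (y : Equiv.Perm I) (O : Finset I)
    (hfix : ∀ a, a ∉ O → y a = a) : ∀ a, a ∈ O ↔ y a ∈ O := by
  intro a
  constructor
  · intro ha
    by_contra hya
    have h1 : y (y a) = y a := hfix _ hya
    have := y.injective h1
    rw [this] at hya
    exact hya ha
  · intro hya
    by_contra ha
    rw [hfix a ha] at hya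
    exact ha hya

/-- Centralizers of elements of `W_I` with pairwise distinct cycles:
(i) the centralizer is the product of the centralizers of the cycles;
(ii) it has order at most `2^k · n^k`;
(iii) it is contained in any subgroup `P = W_{I_1} ⋯ W_{I_m}` containing `w`, so
`C_P(w) = C_{W_I}(w)`. -/
theorem cents_pairwise_distinct {I : Type*} [Fintype I] [DecidableEq I]
    (n : ℕ) (hn : 1 ≤ n) (hcard : Fintype.card I = 2 * n)
    (σ : Equiv.Perm I) (hinv : σ * σ = 1) (hfpf : ∀ a : I, σ a ≠ a)
    (w : Equiv.Perm I) (hw : w ∈ Subgroup.centralizer ({σ} : Set (Equiv.Perm I)))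
    (k : ℕ) (hk : 1 ≤ k)
    (O : Fin k → Finset I)
    (hOne : ∀ i, (O i).Nonempty)
    (hOdisj : ∀ i j, i ≠ j → Disjoint (O i) (O j))
    (hOorb : ∀ i, ∀ a ∈ O i, ∀ b : I,
      b ∈ O i ↔ ∃ g ∈ Subgroup.closure ({w, σ} : Set (Equiv.Perm I)), g a = b)
    (hOcover : ∀ a : I, ∃ i, a ∈ O i)
    (wp : Fin k → Equiv.Perm I)
    (hwp1 : ∀ i, ∀ a ∈ O i, wp i a = w a)
    (hwp2 : ∀ i, ∀ a ∉ O i, wp i a = a)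
    (hdistinct : Function.Injective
      (fun i => ((Equiv.Perm.sign (wp i) : ℤ)) * (((O i).card : ℤ) / 2)))
    (m : ℕ) (J : Fin m → Finset I)
    (hJdisj : ∀ s t, s ≠ t → Disjoint (J s) (J t))
    (hJcover : ∀ a : I, ∃ s, a ∈ J s)
    (hJsigma : ∀ s, ∀ a ∈ J s, σ a ∈ J s)
    (hwP : w ∈ ⨆ s, WO σ (J s)) :
    (Subgroup.centralizer ({σ} : Set (Equiv.Perm I)) ⊓
        Subgroup.centralizer ({w} : Set (Equiv.Perm I)) =
      ⨆ i : Fin k, (WO σ (O i) ⊓ Subgroup.centralizer ({wp i} : Set (Equiv.Perm I)))) ∧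
    Nat.card ↥(Subgroup.centralizer ({σ} : Set (Equiv.Perm I)) ⊓
        Subgroup.centralizer ({w} : Set (Equiv.Perm I))) ≤ 2 ^ k * n ^ k ∧
    ((⨆ s, WO σ (J s)) ⊓ Subgroup.centralizer ({w} : Set (Equiv.Perm I)) =
      Subgroup.centralizer ({σ} : Set (Equiv.Perm I)) ⊓
        Subgroup.centralizer ({w} : Set (Equiv.Perm I))) := by
  classical
  set G := Subgroup.closure ({w, σ} : Set (Equiv.Perm I)) with hG
  set Cw := Subgroup.centralizer ({σ} : Set (Equiv.Perm I)) ⊓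
      Subgroup.centralizer ({w} : Set (Equiv.Perm I)) with hCw
  have hwG : w ∈ G := Subgroup.subset_closure (by simp)
  have hσG : σ ∈ G := Subgroup.subset_closure (by simp)
  have hσσ : ∀ a : I, σ (σ a) = a := by
    intro a
    have := congrArg (fun p : Equiv.Perm I => p a) hinv
    simpa using this
  -- uniqueness of orbit membership
  have huniq : ∀ {a : I} {i j : Fin k}, a ∈ O i → a ∈ O j → i = j := by
    intro a i j hi hj
    by_contra hne
    exact (Finset.disjoint_left.mp (hOdisj i j hne)) hi hj
  -- w and σ preserve orbits
  have hwO : ∀ i, ∀ a ∈ O i, w a ∈ O i := fun i a ha =>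
    (hOorb i a ha (w a)).mpr ⟨w, hwG, rfl⟩
  have hσOmem : ∀ i, ∀ a ∈ O i, σ a ∈ O i := fun i a ha =>
    (hOorb i a ha (σ a)).mpr ⟨σ, hσG, rfl⟩
  have hσO : ∀ i a, a ∈ O i ↔ σ a ∈ O i := by
    intro i a
    refine ⟨hσOmem i a, fun h => ?_⟩
    have := hσOmem i (σ a) h
    rwa [hσσ a] at this
  have hwnot : ∀ i a, a ∉ O i → w a ∉ O i := by
    intro i a ha hwa
    obtain ⟨j, hj⟩ := hOcover a
    exact ha (huniq (hwO j a hj) hwa ▸ hj)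
  -- pointwise commutation with the closure
  have hpt : ∀ x : Equiv.Perm I, x ∈ Cw → ∀ g ∈ G, ∀ a : I, x (g a) = g (x a) := by
    intro x hx g hg a
    have hx' : x ∈ Subgroup.centralizer ({σ} : Set (Equiv.Perm I)) ∧
        x ∈ Subgroup.centralizer ({w} : Set (Equiv.Perm I)) := hx
    have hxσ : Commute σ x := Subgroup.mem_centralizer_iff.mp hx'.1 σ rfl
    have hxw : Commute w x := Subgroup.mem_centralizer_iff.mp hx'.2 w rfl
    have hc : Commute g x := by
      induction hg using Subgroup.closure_induction with
      | mem y hy =>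
        rcases hy with h | h
        · rw [h]; exact hxw
        · simp only [Set.mem_singleton_iff] at h
          rw [h]; exact hxσ
      | one => exact Commute.one_left x
      | mul a b ha hb iha ihb => exact iha.mul_left ihb
      | inv a ha ih => exact ih.inv_left
    calc x (g a) = (x * g) a := rfl
    _ = (g * x) a := by rw [hc.eq]
    _ = g (x a) := rfl
  -- elements of the centralizer of {σ, w} preserve each orbit
  have hstab : ∀ x : Equiv.Perm I, x ∈ Cw → ∀ i a, a ∈ O i ↔ x a ∈ O i := by
    intro x hx i
    obtain ⟨a0, ha0⟩ := hOne i
    obtain ⟨j, hj⟩ := hOcover (x a0)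
    have hbij : ∀ b, b ∈ O i ↔ x b ∈ O j := by
      intro b
      constructor
      · intro hb
        obtain ⟨g, hgG, hgab⟩ := (hOorb i a0 ha0 b).mp hb
        have hxb : x b = g (x a0) := by rw [← hgab, hpt x hx g hgG]
        rw [hxb]
        exact (hOorb j (x a0) hj (g (x a0))).mpr ⟨g, hgG, rfl⟩
      · intro hb
        obtain ⟨g, hgG, hgab⟩ := (hOorb j (x a0) hj (x b)).mp hb
        have hb' : g a0 = b := x.injective (by rw [← hpt x hx g hgG] at hgab; exact hgab)
        rw [← hb']
        exact (hOorb i a0 ha0 _).mpr ⟨g, hgG, rfl⟩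
    have himg : O j = (O i).image x := by
      ext c
      simp only [Finset.mem_image]
      constructor
      · intro hc
        refine ⟨x.symm c, ?_, by simp⟩
        rw [hbij (x.symm c)]
        simpa using hc
      · rintro ⟨b, hb, rfl⟩
        exact (hbij b).mp hb
    have hcardeq : (O i).card = (O j).card := by
      rw [himg, Finset.card_image_of_injective _ x.injective]
    have hconj : x * wp i * x⁻¹ = wp j := by
      ext b
      simp only [Equiv.Perm.mul_apply]
      by_cases hb : b ∈ O j
      · have hb' : x⁻¹ b ∈ O i := by
          rw [hbij (x⁻¹ b)]
          simpa using hb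
        rw [hwp1 i _ hb', hwp1 j _ hb, hpt x hx w hwG]
        simp
      · have hb' : x⁻¹ b ∉ O i := by
          intro h
          apply hb
          have := (hbij _).mp h
          simpa using this
        rw [hwp2 i _ hb', hwp2 j _ hb]
        simp
    have hsign : Equiv.Perm.sign (wp i) = Equiv.Perm.sign (wp j) := by
      rw [← hconj]
      simp only [map_mul, map_inv]
      rw [mul_comm (Equiv.Perm.sign x)]
      simp
      rw [mul_assoc, Int.units_mul_self, mul_one]
    have hij : i = j := hdistinct (show ((Equiv.Perm.sign (wp i) : ℤ)) * (((O i).card : ℤ) / 2)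
      = ((Equiv.Perm.sign (wp j) : ℤ)) * (((O j).card : ℤ) / 2) by rw [hsign, hcardeq])
    subst hij
    exact hbij
  -- Part (i), ⊇ direction
  have hsup_le : (⨆ i : Fin k, (WO σ (O i) ⊓
      Subgroup.centralizer ({wp i} : Set (Equiv.Perm I)))) ≤ Cw := by
    apply iSup_le
    intro i
    apply le_inf
    · exact fun y hy => hy.1.1
    · intro y hy
      have hy' : (y ∈ Subgroup.centralizer ({σ} : Set (Equiv.Perm I)) ∧
          y ∈ fixingSubgroup (Equiv.Perm I) ((↑(O i) : Set I)ᶜ)) ∧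
          y ∈ Subgroup.centralizer ({wp i} : Set (Equiv.Perm I)) := hy
      have hyfix' : ∀ a, a ∉ O i → y a = a := by
        intro a ha
        exact (mem_fixingSubgroup_iff (Equiv.Perm I)).mp hy'.1.2 a (by simpa using ha)
      have hystab := fix_compl_stable y (O i) hyfix'
      have hywpm : wp i * y = y * wp i := Subgroup.mem_centralizer_iff.mp hy'.2 (wp i) rfl
      have hywp : ∀ a, y (wp i a) = wp i (y a) := by
        intro a
        calc y (wp i a) = (y * wp i) a := rfl
        _ = (wp i * y) a := by rw [hywpm]
        _ = wp i (y a) := rfl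
      rw [Subgroup.mem_centralizer_iff]
      intro h hh
      simp only [Set.mem_singleton_iff] at hh
      rw [hh]
      ext a
      simp only [Equiv.Perm.mul_apply]
      by_cases ha : a ∈ O i
      · have hya : y a ∈ O i := (hystab a).mp ha
        rw [← hwp1 i (y a) hya, ← hywp a, hwp1 i a ha]
      · have hwa : w a ∉ O i := hwnot i a ha
        rw [hyfix' a ha, hyfix' (w a) hwa]
  -- Part (i), ⊆ direction
  have hle_sup : Cw ≤ ⨆ i : Fin k, (WO σ (O i) ⊓
      Subgroup.centralizer ({wp i} : Set (Equiv.Perm I))) := by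
    intro x hx
    set xi : Fin k → Equiv.Perm I := fun i => restrictPerm x (O i) (hstab x hx i) with hxi
    have hxi_mem : ∀ i a, a ∈ O i → xi i a = x a := fun i a ha =>
      restrictPerm_apply_mem x (O i) (hstab x hx i) ha
    have hxi_not : ∀ i a, a ∉ O i → xi i a = a := fun i a ha =>
      restrictPerm_apply_not_mem x (O i) (hstab x hx i) ha
    have hximem : ∀ i, xi i ∈ WO σ (O i) ⊓
        Subgroup.centralizer ({wp i} : Set (Equiv.Perm I)) := by
      intro i
      have h1 : xi i ∈ Subgroup.centralizer ({σ} : Set (Equiv.Perm I)) := by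
        rw [Subgroup.mem_centralizer_iff]
        intro h hh
        simp only [Set.mem_singleton_iff] at hh
        rw [hh]
        ext a
        simp only [Equiv.Perm.mul_apply]
        by_cases ha : a ∈ O i
        · rw [hxi_mem i a ha, hxi_mem i (σ a) (hσOmem i a ha), hpt x hx σ hσG]
        · have hσa : σ a ∉ O i := fun h => ha ((hσO i a).mpr h)
          rw [hxi_not i a ha, hxi_not i (σ a) hσa]
      have h2 : xi i ∈ fixingSubgroup (Equiv.Perm I) ((↑(O i) : Set I)ᶜ) := by
        rw [mem_fixingSubgroup_iff]
        intro a ha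
        simp only [Set.mem_compl_iff, Finset.mem_coe] at ha
        simpa using hxi_not i a ha
      have h3 : xi i ∈ Subgroup.centralizer ({wp i} : Set (Equiv.Perm I)) := by
        rw [Subgroup.mem_centralizer_iff]
        intro h hh
        simp only [Set.mem_singleton_iff] at hh
        rw [hh]
        ext a
        simp only [Equiv.Perm.mul_apply]
        by_cases ha : a ∈ O i
        · have hwa : w a ∈ O i := hwO i a ha
          have hxa : x a ∈ O i := (hstab x hx i a).mp ha
          rw [hxi_mem i a ha, hwp1 i (x a) hxa, hwp1 i a ha, hxi_mem i (w a) hwa,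
            hpt x hx w hwG]
        · rw [hwp2 i a ha, hxi_not i a ha, hwp2 i a ha]
      exact ⟨⟨h1, h2⟩, h3⟩
    have hcommXi : ∀ i ∈ (Finset.univ : Finset (Fin k)), ∀ j ∈ Finset.univ,
        i ≠ j → Commute (xi i) (xi j) := by
      intro i _ j _ hij
      have key : ∀ a, xi i (xi j a) = xi j (xi i a) := by
        intro a
        by_cases hai : a ∈ O i
        · have haj : a ∉ O j := fun h => hij (huniq hai h)
          have hxa : x a ∈ O i := (hstab x hx i a).mp hai
          have hxaj : x a ∉ O j := fun h => hij (huniq hxa h)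
          calc xi i (xi j a) = xi i a := by rw [hxi_not j a haj]
          _ = x a := hxi_mem i a hai
          _ = xi j (x a) := (hxi_not j (x a) hxaj).symm
          _ = xi j (xi i a) := by rw [hxi_mem i a hai]
        · by_cases haj : a ∈ O j
          · have hxa : x a ∈ O j := (hstab x hx j a).mp haj
            have hxai : x a ∉ O i := fun h => hij (huniq h hxa)
            calc xi i (xi j a) = xi i (x a) := by rw [hxi_mem j a haj]
            _ = x a := hxi_not i (x a) hxai
            _ = xi j a := (hxi_mem j a haj).symm
            _ = xi j (xi i a) := by rw [hxi_not i a hai]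
          · calc xi i (xi j a) = xi i a := by rw [hxi_not j a haj]
            _ = a := hxi_not i a hai
            _ = xi j a := (hxi_not j a haj).symm
            _ = xi j (xi i a) := by rw [hxi_not i a hai]
      ext a
      simp only [Equiv.Perm.mul_apply]
      exact key a
    have heval : ∀ S : Finset (Fin k), ∀ a : I,
        (S.noncommProd xi (fun u _ v _ huv => hcommXi u (Finset.mem_univ u) v
          (Finset.mem_univ v) huv)) a = if ∃ i ∈ S, a ∈ O i then x a else a := by
      intro S
      induction S using Finset.induction_on with
      | empty => intro a; exact (congrArg (fun p : Equiv.Perm I => p a) (Finset.noncommProd_empty _ _)).trans (by simp)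
      | @insert i0 S hi0 ih =>
        intro a
        refine (congrArg (fun p : Equiv.Perm I => p a) (Finset.noncommProd_insert_of_notMem _ _ _ _ hi0)).trans ?_
        simp only [Equiv.Perm.mul_apply]
        by_cases ha : a ∈ O i0
        · have hnot : ¬ ∃ j ∈ S, a ∈ O j := by
            rintro ⟨j, hjS, hja⟩
            exact hi0 (huniq ha hja ▸ hjS)
          rw [ih a, if_neg hnot, hxi_mem i0 a ha, if_pos ⟨i0, Finset.mem_insert_self _ _, ha⟩]
        · by_cases hex : ∃ j ∈ S, a ∈ O j
          · obtain ⟨j, hjS, hja⟩ := hex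
            have hxa : x a ∈ O j := (hstab x hx j a).mp hja
            have hxa0 : x a ∉ O i0 := fun h => hi0 (huniq hxa h ▸ hjS)
            rw [ih a, if_pos ⟨j, hjS, hja⟩, hxi_not i0 (x a) hxa0,
              if_pos ⟨j, Finset.mem_insert_of_mem hjS, hja⟩]
          · rw [ih a, if_neg hex, hxi_not i0 a ha]
            rw [if_neg]
            rintro ⟨j, hjS, hja⟩
            rcases Finset.mem_insert.mp hjS with h | h
            · exact ha (h ▸ hja)
            · exact hex ⟨j, h, hja⟩
    have hxeq : x = Finset.univ.noncommProd xi
        (fun u _ v _ huv => hcommXi u (Finset.mem_univ u) v (Finset.mem_univ v) huv) := by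
      ext a
      rw [heval Finset.univ a]
      obtain ⟨i, hi⟩ := hOcover a
      rw [if_pos ⟨i, Finset.mem_univ i, hi⟩]
    rw [hxeq]
    apply Subgroup.noncommProd_mem
    intro i _
    exact (le_iSup (fun i => WO σ (O i) ⊓
      Subgroup.centralizer ({wp i} : Set (Equiv.Perm I))) i) (hximem i)
  have part1 : Cw = ⨆ i : Fin k, (WO σ (O i) ⊓
      Subgroup.centralizer ({wp i} : Set (Equiv.Perm I))) :=
    le_antisymm hle_sup hsup_le
  -- Part (ii)
  have part2 : Nat.card ↥Cw ≤ 2 ^ k * n ^ k := by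
    have a0 : ∀ i, (O i).Nonempty := hOne
    set pt : Fin k → I := fun i => (hOne i).choose with hpt0
    have hptmem : ∀ i, pt i ∈ O i := fun i => (hOne i).choose_spec
    have hinj : Function.Injective (fun x : ↥Cw => fun i => (x : Equiv.Perm I) (pt i)) := by
      intro x y hxy
      have hval : ∀ i, (x : Equiv.Perm I) (pt i) = (y : Equiv.Perm I) (pt i) := by
        intro i
        exact congrFun hxy i
      apply Subtype.ext
      ext b
      obtain ⟨i, hi⟩ := hOcover b
      obtain ⟨g, hgG, hgab⟩ := (hOorb i (pt i) (hptmem i) b).mp hi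
      rw [← hgab, hpt x x.2 g hgG, hpt y y.2 g hgG, hval i]
    calc Nat.card ↥Cw ≤ Nat.card (Fin k → I) := Nat.card_le_card_of_injective _ hinj
    _ = (2 * n) ^ k := by
        rw [Nat.card_eq_fintype_card, Fintype.card_fun, hcard, Fintype.card_fin]
    _ = 2 ^ k * n ^ k := mul_pow 2 n k
  -- Part (iii)
  have hPle : (⨆ s, WO σ (J s)) ≤ Subgroup.centralizer ({σ} : Set (Equiv.Perm I)) :=
    iSup_le fun s => inf_le_left
  -- the subgroup preserving each J s
  have hJuniq : ∀ {a : I} {s t : Fin m}, a ∈ J s → a ∈ J t → s = t := by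
    intro a s t hs ht
    by_contra hne
    exact (Finset.disjoint_left.mp (hJdisj s t hne)) hs ht
  set H : Subgroup (Equiv.Perm I) :=
    { carrier := {g | ∀ s, ∀ a ∈ J s, g a ∈ J s}
      one_mem' := by intro s a ha; simpa using ha
      mul_mem' := by
        intro g h hg hh s a ha
        exact hg s (h a) (hh s a ha)
      inv_mem' := by
        intro g hg s a ha
        have himg : (J s).image g = J s := by
          apply Finset.eq_of_subset_of_card_le
          · intro c hc
            obtain ⟨b, hb, rfl⟩ := Finset.mem_image.mp hc
            exact hg s b hb
          · rw [Finset.card_image_of_injective _ g.injective]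
        obtain ⟨b, hb, hgb⟩ := Finset.mem_image.mp (himg ▸ ha)
        have : g⁻¹ a = b := by rw [← hgb]; simp
        rw [this]
        exact hb } with hH
  have hsupH : (⨆ s, WO σ (J s)) ≤ H := by
    apply iSup_le
    intro t y hy
    have hy' : y ∈ Subgroup.centralizer ({σ} : Set (Equiv.Perm I)) ∧
        y ∈ fixingSubgroup (Equiv.Perm I) ((↑(J t) : Set I)ᶜ) := hy
    have hyfix' : ∀ a, a ∉ J t → y a = a := by
      intro a ha
      exact (mem_fixingSubgroup_iff (Equiv.Perm I)).mp hy'.2 a (by simpa using ha)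
    show ∀ s, ∀ a ∈ J s, y a ∈ J s
    intro s a ha
    by_cases hst : s = t
    · subst hst
      exact (fix_compl_stable y (J s) hyfix' a).mp ha
    · have hat : a ∉ J t := fun h => hst (hJuniq ha h)
      rw [hyfix' a hat]
      exact ha
  have hwH : w ∈ H := hsupH hwP
  have hGH : G ≤ H := by
    rw [hG]
    apply Subgroup.closure_le H |>.mpr
    intro g hg
    rcases hg with h | h
    · exact h ▸ hwH
    · simp only [Set.mem_singleton_iff] at h
      subst h
      exact hJsigma
  have hOJ : ∀ i, ∃ s, ∀ a ∈ O i, a ∈ J s := by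
    intro i
    obtain ⟨a0, ha0⟩ := hOne i
    obtain ⟨s, hs⟩ := hJcover a0
    refine ⟨s, fun b hb => ?_⟩
    obtain ⟨g, hgG, hgab⟩ := (hOorb i a0 ha0 b).mp hb
    rw [← hgab]
    exact hGH hgG s a0 hs
  have part3 : (⨆ s, WO σ (J s)) ⊓
      Subgroup.centralizer ({w} : Set (Equiv.Perm I)) = Cw := by
    apply le_antisymm
    · exact inf_le_inf_right _ hPle
    · have hA : (⨆ i : Fin k, (WO σ (O i) ⊓
          Subgroup.centralizer ({wp i} : Set (Equiv.Perm I)))) ≤ ⨆ s, WO σ (J s) := by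
        apply iSup_le
        intro i
        obtain ⟨s, hs⟩ := hOJ i
        refine le_trans ?_ (le_iSup (fun s => WO σ (J s)) s)
        intro y hy
        have hy' : (y ∈ Subgroup.centralizer ({σ} : Set (Equiv.Perm I)) ∧
            y ∈ fixingSubgroup (Equiv.Perm I) ((↑(O i) : Set I)ᶜ)) ∧
            y ∈ Subgroup.centralizer ({wp i} : Set (Equiv.Perm I)) := hy
        refine ⟨hy'.1.1, (mem_fixingSubgroup_iff (Equiv.Perm I)).mpr ?_⟩
        intro a ha
        have haO : a ∉ O i := by
          intro h
          have haJ : a ∉ J s := by simpa using ha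
          exact haJ (hs a h)
        exact (mem_fixingSubgroup_iff (Equiv.Perm I)).mp hy'.1.2 a (by simpa using haO)
      exact part1.le.trans (le_inf hA (hsup_le.trans inf_le_right))
  exact ⟨part1, part2, part3⟩
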